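/- Let R be a commutative ring, I ⊆ R an ideal with I^n = 0 for some n > 0, and M an R-module. Let N and N′ be direct summands of M whose images in M/IM coincide. Then any R-linear projection p : M → N (i.e. p restricted to N is the identity) restricts to an isomorphism N′ ≅ N. -/

import Mathlib

private lemma aux_nilp {R A : Type*} [CommRing R] [AddCommGroup A] [Module R A]
    (I : Ideal R) {n : ℕ} (hn : 0 < n) (hIn : I ^ n = ⊥)
    (h : Module.End R A) (hr : LinearMap.range h ≤ I • ⊤) :
    IsNilpotent h := by
  have key : ∀ k : ℕ, LinearMap.range (h ^ (k + 1)) ≤ (I ^ (k + 1)) • ⊤ := by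
    intro k
    induction k with
    | zero => simpa using hr
    | succ k ih =>
      rw [pow_succ h (k+1)]
      have : LinearMap.range ((h ^ (k + 1)) * h)
          = Submodule.map (h ^ (k + 1)) (LinearMap.range h) := by
        rw [LinearMap.range_eq_map, LinearMap.range_eq_map, ← Submodule.map_comp]
        rfl
      rw [this]
      calc Submodule.map (h ^ (k + 1)) (LinearMap.range h)
          ≤ Submodule.map (h ^ (k + 1)) (I • ⊤) := Submodule.map_mono hr
        _ = I • Submodule.map (h ^ (k + 1)) ⊤ := Submodule.map_smul'' _ _ _
        _ ≤ I • ((I ^ (k + 1)) • ⊤) := Submodule.smul_mono le_rfl (by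
              rw [← LinearMap.range_eq_map]; exact ih)
        _ = (I ^ (k + 2)) • ⊤ := by rw [← Submodule.smul_assoc, smul_eq_mul, ← pow_succ']
  refine ⟨n, ?_⟩
  have := key (n - 1)
  rw [Nat.sub_add_cancel hn, hIn] at this
  simp only [Submodule.bot_smul, le_bot_iff, LinearMap.range_eq_bot] at this
  exact this

/-- If `I` is nilpotent and `N`, `N′` are direct summands of `M` with the same image in
`M/IM`, then any projection of `M` onto `N` restricts to an isomorphism `N′ ≅ N`. -/
theorem stmt_3 {R M : Type*} [CommRing R] [AddCommGroup M] [Module R M]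
    (I : Ideal R) (hI : ∃ n > 0, I ^ n = ⊥)
    (N N' : Submodule R M)
    (hN : ∃ N₂, IsCompl N N₂) (hN' : ∃ N₂, IsCompl N' N₂)
    (him : N.map (I • (⊤ : Submodule R M)).mkQ = N'.map (I • (⊤ : Submodule R M)).mkQ)
    (p : M →ₗ[R] M) (hpN : LinearMap.range p ≤ N) (hid : ∀ x ∈ N, p x = x) :
    ∃ e : N' ≃ₗ[R] N, ∀ x : N', (e x : M) = p x := by
  obtain ⟨n, hn, hIn⟩ := hI
  obtain ⟨N₂', hc⟩ := hN'
  set J : Submodule R M := I • ⊤ with hJ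
  set π : M →ₗ[R] N' := N'.projectionOnto N₂' hc with hπ
  set q : M →ₗ[R] M := N'.subtype ∘ₗ π with hq
  have hqN' : ∀ x ∈ N', q x = x := fun x hx => by
    simp [hq, hπ, Submodule.projectionOnto_apply_of_mem_left hc hx]
  have hqrange : LinearMap.range q ≤ N' := fun y ⟨x, hx⟩ => hx ▸ (π x).2
  -- p maps J into I • N ≤ J, q maps J into I • N'
  have hpJ : Submodule.map p J ≤ I • N := by
    rw [hJ, Submodule.map_smul'']
    exact Submodule.smul_mono le_rfl (by rw [← LinearMap.range_eq_map]; exact hpN)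
  have hqJ : Submodule.map q J ≤ I • N' := by
    rw [hJ, Submodule.map_smul'']
    exact Submodule.smul_mono le_rfl (by rw [← LinearMap.range_eq_map]; exact hqrange)
  have hIN : (I • N : Submodule R M) ≤ J := Submodule.smul_mono le_rfl le_top
  have hIN' : (I • N' : Submodule R M) ≤ J := Submodule.smul_mono le_rfl le_top
  -- key congruences
  have h1 : ∀ x ∈ N', x - p x ∈ J := by
    intro x hx
    have : J.mkQ x ∈ N.map J.mkQ := by
      rw [him]; exact ⟨x, hx, rfl⟩
    obtain ⟨y, hy, hxy⟩ := this
    have hyx : y - x ∈ J := by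
      rw [← Submodule.ker_mkQ J, LinearMap.mem_ker, map_sub, hxy, sub_self]
    have : x - p x = -((y - x) - p (y - x)) := by
      rw [map_sub, hid y hy]; abel
    rw [this]
    exact neg_mem (sub_mem hyx (hIN (hpJ ⟨y - x, hyx, rfl⟩)))
  have h2 : ∀ y ∈ N, y - q y ∈ J := by
    intro y hy
    have : J.mkQ y ∈ N'.map J.mkQ := by
      rw [← him]; exact ⟨y, hy, rfl⟩
    obtain ⟨x, hx, hxy⟩ := this
    have hxyJ : x - y ∈ J := by
      rw [← Submodule.ker_mkQ J, LinearMap.mem_ker, map_sub, hxy, sub_self]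
    have : y - q y = -((x - y) - q (x - y)) := by
      rw [map_sub, hqN' x hx]; abel
    rw [this]
    exact neg_mem (sub_mem hxyJ (hIN' (hqJ ⟨x - y, hxyJ, rfl⟩)))
  -- the restricted map f : N' → N
  set f : N' →ₗ[R] N := LinearMap.codRestrict N (p ∘ₗ N'.subtype)
      (fun x => hpN ⟨x, rfl⟩) with hf
  -- u = π ∘ p ∘ incl : End N', v : End N
  set u : Module.End R N' := π ∘ₗ p ∘ₗ N'.subtype with hu
  set v : Module.End R N := LinearMap.codRestrict N (p ∘ₗ q ∘ₗ N.subtype)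
      (fun y => hpN ⟨q y, rfl⟩) with hv
  -- u - 1 has range in I • ⊤
  have mem_smul_top_of : ∀ (P : Submodule R M) (z : P), (z : M) ∈ I • P →
      z ∈ (I • ⊤ : Submodule R P) := by
    intro P z hz
    have : (z : M) ∈ Submodule.map P.subtype (I • ⊤ : Submodule R P) := by
      rw [Submodule.map_smul'', Submodule.map_top, Submodule.range_subtype]
      exact hz
    obtain ⟨w, hw, hwz⟩ := this
    rwa [show w = z from Subtype.ext hwz] at hw
  have hu1 : LinearMap.range (u - 1) ≤ (I • ⊤ : Submodule R N') := by
    rintro _ ⟨x, rfl⟩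
    apply mem_smul_top_of
    have : (((u - 1) x : N') : M) = q (p x - x) := by
      simp [hu, hq, hqN' (x : M) x.2, map_sub, hπ]
    rw [this]
    exact hqJ ⟨p x - x, by simpa using neg_mem (h1 x x.2), rfl⟩
  have hv1 : LinearMap.range (v - 1) ≤ (I • ⊤ : Submodule R N) := by
    rintro _ ⟨y, rfl⟩
    apply mem_smul_top_of
    have : (((v - 1) y : N) : M) = p (q y - y) := by
      simp [hv, map_sub, hid (y : M) y.2]
    rw [this]
    exact hpJ ⟨q y - y, by simpa using neg_mem (h2 y y.2), rfl⟩
  have hu_unit : IsUnit u := by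
    have := (aux_nilp I hn hIn (u - 1) hu1).isUnit_one_add
    simpa using this
  have hv_unit : IsUnit v := by
    have := (aux_nilp I hn hIn (v - 1) hv1).isUnit_one_add
    simpa using this
  have hu_bij := (Module.End.isUnit_iff u).mp hu_unit
  have hv_bij := (Module.End.isUnit_iff v).mp hv_unit
  -- u = (π ∘ subtype) ∘ f, v = f ∘ (π ∘ subtype)
  set g : N →ₗ[R] N' := π ∘ₗ N.subtype with hg
  have hufg : ∀ x : N', u x = g (f x) := fun x => rfl
  have hvfg : ∀ y : N, v y = f (g y) := by
    intro y
    apply Subtype.ext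
    rfl
  have hfinj : Function.Injective f := by
    intro a b hab
    apply hu_bij.1
    rw [hufg, hufg, hab]
  have hfsurj : Function.Surjective f := by
    intro y
    obtain ⟨z, hz⟩ := hv_bij.2 y
    exact ⟨g z, by rw [← hvfg, hz]⟩
  exact ⟨LinearEquiv.ofBijective f ⟨hfinj, hfsurj⟩, fun x => rfl⟩
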